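/- For α ∈ F_{q^n}, the set {α, α^q, ..., α^{q^{n-1}}} is a normal basis of F_{q^n} over F_q if and only if the polynomials x^n - 1 and g_α(x) = α x^{n-1} + α^q x^{n-2} + ... + α^{q^{n-2}} x + α^{q^{n-1}} in F_{q^n}[x] are relatively prime. -/

import Mathlib

open Polynomial

lemma aux_pow_mod {M : Type*} [Monoid M] {t : M} {n : ℕ} (h : t ^ n = 1) (a : ℕ) :
    t ^ (a % n) = t ^ a := by
  conv_rhs => rw [← Nat.div_add_mod a n, pow_add, pow_mul, h, one_pow, one_mul]

lemma aux_qpow_mod {L : Type*} [Monoid L] {α : L} {q n : ℕ} (h : α ^ q ^ n = α) (a : ℕ) :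
    α ^ q ^ (a % n) = α ^ q ^ a := by
  have key : ∀ k, α ^ q ^ (n * k) = α := by
    intro k
    induction k with
    | zero => simp
    | succ k ih => rw [Nat.mul_succ, pow_add, pow_mul, ih, h]
  conv_rhs => rw [← Nat.div_add_mod a n, pow_add, pow_mul, key]

lemma aux_exp {n : ℕ} (j k : ℕ) (hn : 0 < n) (hj : j < n) (hk : k < n) :
    (j + (n - 1 - (j + k) % n)) % n = n - 1 - k := by
  rcases Nat.lt_or_ge (j + k) n with h | h
  · rw [Nat.mod_eq_of_lt h]
    have e : j + (n - 1 - (j + k)) = n - 1 - k := by omega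
    rw [e]
    exact Nat.mod_eq_of_lt (by omega)
  · have h2 : (j + k) % n = j + k - n := by
      rw [Nat.mod_eq_sub_mod h]
      exact Nat.mod_eq_of_lt (by omega)
    rw [h2]
    have e : j + (n - 1 - (j + k - n)) = (n - 1 - k) + n := by omega
    rw [e, Nat.add_mod_right]
    exact Nat.mod_eq_of_lt (by omega)

theorem stmt7 (q n : ℕ) (hq : 1 < q) (hn : 0 < n)
    (K : Type*) [Field K] [Fintype K] (hK : Fintype.card K = q)
    (L : Type*) [Field L] [Fintype L] [Algebra K L]
    (hrank : Module.finrank K L = n)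
    (α : L) :
    (∃ b : Module.Basis (Fin n) K L, ∀ i : Fin n, b i = α ^ q ^ (i : ℕ)) ↔
      IsCoprime (Polynomial.X ^ n - 1 : Polynomial L)
        (∑ i ∈ Finset.range n,
          Polynomial.C (α ^ q ^ i) * Polynomial.X ^ (n - 1 - i)) := by
  classical
  haveI : NeZero n := ⟨hn.ne'⟩
  have hcardL : Fintype.card L = q ^ n := by rw [← hK, ← hrank]; exact Module.card_eq_pow_finrank
  have hLpow : ∀ x : L, x ^ q ^ n = x := fun x => by rw [← hcardL]; exact FiniteField.pow_card x
  have hα : ∀ a : ℕ, α ^ q ^ (a % n) = α ^ q ^ a := aux_qpow_mod (hLpow α)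
  have hadd : ∀ (k : ℕ) (x y : L), (x + y) ^ q ^ k = x ^ q ^ k + y ^ q ^ k := by
    haveI := ringChar.charP K
    obtain ⟨f, hp, hf⟩ := FiniteField.card K (ringChar K)
    haveI : Fact (Nat.Prime (ringChar K)) := ⟨hp⟩
    haveI : CharP L (ringChar K) := charP_of_injective_algebraMap (algebraMap K L).injective _
    intro k x y
    rw [← hK, hf, ← pow_mul]
    exact add_pow_char_pow x y _ _
  have hKpow : ∀ (a : K) (k : ℕ), a ^ q ^ k = a := by
    intro a k
    induction k with
    | zero => simp
    | succ k ih => rw [pow_succ, pow_mul, ih, ← hK]; exact FiniteField.pow_card a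
  set M : Matrix (Fin n) (Fin n) L := Matrix.of (fun k j => α ^ q ^ ((k.val + j.val) % n)) with hM
  have h1 : (∃ b : Module.Basis (Fin n) K L, ∀ i : Fin n, b i = α ^ q ^ (i : ℕ)) ↔
      LinearIndependent K (fun i : Fin n => α ^ q ^ (i : ℕ)) := by
    constructor
    · rintro ⟨b, hb⟩
      have : (fun i : Fin n => α ^ q ^ (i : ℕ)) = ⇑b := by funext i; rw [hb]
      rw [this]
      exact b.linearIndependent
    · intro hLI
      refine ⟨basisOfLinearIndependentOfCardEqFinrank hLI (by simp [hrank]), fun i => ?_⟩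
      rw [coe_basisOfLinearIndependentOfCardEqFinrank]
  have hrow : ∀ (v : Fin n → L) (k : Fin n),
      M.mulVec v k = ∑ j : Fin n, α ^ q ^ (((k:ℕ) + (j:ℕ)) % n) * v j := by
    intro v k
    simp [hM, Matrix.mulVec, dotProduct]
  have hterm : ∀ (aj : K) (j k : ℕ),
      (aj • α ^ q ^ j) ^ q ^ k = algebraMap K L aj * α ^ q ^ ((j + k) % n) := by
    intro aj j k
    rw [Algebra.smul_def, mul_pow, ← map_pow, hKpow, ← pow_mul, ← pow_add, hα]
  have hsum_pow : ∀ (k : ℕ) (s : Finset (Fin n)) (v : Fin n → L),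
      (∑ j ∈ s, v j) ^ q ^ k = ∑ j ∈ s, (v j) ^ q ^ k := by
    intro k s v
    induction s using Finset.cons_induction with
    | empty => simp [zero_pow (pow_ne_zero _ (by omega : q ≠ 0))]
    | cons a s ha ih => rw [Finset.sum_cons, Finset.sum_cons, hadd, ih]
  have h2 : LinearIndependent K (fun i : Fin n => α ^ q ^ (i : ℕ)) ↔ M.det ≠ 0 := by
    constructor
    · intro hLI
      set b := basisOfLinearIndependentOfCardEqFinrank hLI (by simp [hrank]) with hbdef
      have hbe : ∀ i : Fin n, b i = α ^ q ^ (i : ℕ) := fun i => by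
        rw [hbdef, coe_basisOfLinearIndependentOfCardEqFinrank]
      intro hdet
      obtain ⟨c, hc0, hcv⟩ := Matrix.exists_mulVec_eq_zero_iff.mpr hdet
      set P : Polynomial L := ∑ k : Fin n, Polynomial.C (c k) * Polynomial.X ^ (q ^ (k : ℕ))
        with hP
      have hPeval : ∀ x : L, P.eval x = 0 := by
        intro x
        have hxp : ∀ k : Fin n, x ^ q ^ (k : ℕ) =
            ∑ j : Fin n, algebraMap K L (b.repr x j) * α ^ q ^ (((j:ℕ) + (k:ℕ)) % n) := by
          intro k
          conv_lhs => rw [← b.sum_repr x]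
          rw [hsum_pow]
          refine Finset.sum_congr rfl fun j _ => ?_
          rw [← hterm, hbe]
        have heval : P.eval x = ∑ k : Fin n, c k * x ^ q ^ (k : ℕ) := by
          simp [hP, Polynomial.eval_finset_sum]
        rw [heval]
        calc ∑ k : Fin n, c k * x ^ q ^ (k : ℕ)
            = ∑ k : Fin n, ∑ j : Fin n,
              algebraMap K L (b.repr x j) * (α ^ q ^ (((j:ℕ) + (k:ℕ)) % n) * c k) := by
              refine Finset.sum_congr rfl fun k _ => ?_
              rw [hxp k, Finset.mul_sum]
              refine Finset.sum_congr rfl fun j _ => ?_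
              ring
          _ = ∑ j : Fin n, algebraMap K L (b.repr x j) *
              (∑ k : Fin n, α ^ q ^ (((j:ℕ) + (k:ℕ)) % n) * c k) := by
              rw [Finset.sum_comm]
              exact Finset.sum_congr rfl fun j _ => (Finset.mul_sum _ _ _).symm
          _ = 0 := by
              refine Finset.sum_eq_zero fun j _ => ?_
              rw [← hrow c j, hcv]
              simp
      have hPzero : P = 0 := by
        refine Polynomial.eq_zero_of_natDegree_lt_card_of_eval_eq_zero P
          (f := (id : L → L)) Function.injective_id (fun x => hPeval x) ?_
        have h1 : P.natDegree ≤ q ^ (n - 1) := by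
          refine Polynomial.natDegree_sum_le_of_forall_le _ _ fun k _ => ?_
          refine le_trans (Polynomial.natDegree_C_mul_le _ _) ?_
          rw [Polynomial.natDegree_X_pow]
          exact Nat.pow_le_pow_right (by omega) (by omega)
        calc P.natDegree ≤ q ^ (n - 1) := h1
          _ < q ^ n := Nat.pow_lt_pow_right hq (by omega)
          _ = Fintype.card L := hcardL.symm
      apply hc0
      funext k
      have : P.coeff (q ^ (k : ℕ)) = c k := by
        rw [hP, Polynomial.finset_sum_coeff]
        rw [Finset.sum_eq_single k]
        · simp
        · intro j _ hjk
          have hne : ¬ (q ^ (j : ℕ) = q ^ (k : ℕ)) := fun h =>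
            hjk (Fin.ext (Nat.pow_right_injective (by omega) h))
          have hne2 : ¬ (q ^ (k : ℕ) = q ^ (j : ℕ)) := fun h => hne h.symm
          simp [Polynomial.coeff_X_pow, hne, hne2]
        · simp
      rw [hPzero] at this
      simpa using this.symm
    · intro hdet
      rw [Fintype.linearIndependent_iff]
      intro a ha
      have hv : M.mulVec (fun j => algebraMap K L (a j)) = 0 := by
        funext k
        simp only [Pi.zero_apply]
        rw [hrow]
        have h0 : (0 : L) ^ q ^ (k : ℕ) = 0 := zero_pow (pow_ne_zero _ (by omega : q ≠ 0))
        have := congrArg (fun x : L => x ^ q ^ (k : ℕ)) ha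
        rw [hsum_pow, h0] at this
        rw [← this]
        refine (Finset.sum_congr rfl fun j _ => ?_).symm
        rw [hterm, Nat.add_comm (j : ℕ) (k : ℕ)]
        ring
      have hz : (fun j => algebraMap K L (a j)) = 0 := by
        by_contra hne
        exact hdet (Matrix.exists_mulVec_eq_zero_iff.mp ⟨_, hne, hv⟩)
      intro i
      have := congrFun hz i
      simpa using this
  have h3 : M.det ≠ 0 ↔ IsCoprime (Polynomial.X ^ n - 1 : Polynomial L)
      (∑ i ∈ Finset.range n, Polynomial.C (α ^ q ^ i) * Polynomial.X ^ (n - 1 - i)) := by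
    set gp : Polynomial L :=
      ∑ i ∈ Finset.range n, Polynomial.C (α ^ q ^ i) * Polynomial.X ^ (n - 1 - i) with hgp
    have hgfin : gp =
        ∑ i : Fin n, Polynomial.C (α ^ q ^ (i : ℕ)) * Polynomial.X ^ (n - 1 - (i : ℕ)) := by
      rw [hgp, Fin.sum_univ_eq_sum_range
        (fun i => Polynomial.C (α ^ q ^ i) * Polynomial.X ^ (n - 1 - i))]
    have hdegf : (Polynomial.X ^ n - 1 : Polynomial L).degree = n := by
      have he : (Polynomial.X ^ n - 1 : Polynomial L) =
          Polynomial.X ^ n - Polynomial.C 1 := by rw [Polynomial.C_1]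
      rw [he]
      exact Polynomial.degree_X_pow_sub_C hn 1
    have hfne : (Polynomial.X ^ n - 1 : Polynomial L) ≠ 0 := by
      intro h
      rw [h, Polynomial.degree_zero] at hdegf
      exact absurd hdegf (by simp)
    constructor
    · -- det ≠ 0 → coprime
      intro hdet
      by_contra hncop
      apply hdet
      set d := EuclideanDomain.gcd (Polynomial.X ^ n - 1 : Polynomial L) gp with hd
      have hd1 : d ∣ Polynomial.X ^ n - 1 := EuclideanDomain.gcd_dvd_left _ _
      have hd2 : d ∣ gp := EuclideanDomain.gcd_dvd_right _ _
      have hdu : ¬ IsUnit d := fun h => hncop (EuclideanDomain.gcd_isUnit_iff.mp h)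
      have hddeg : d.degree ≠ 0 := fun h =>
        hdu (Polynomial.isUnit_iff_degree_eq_zero.mpr h)
      have hmapdeg : (d.map (algebraMap L (AlgebraicClosure L))).degree ≠ 0 := by
        rwa [Polynomial.degree_map]
      obtain ⟨β, hβ⟩ := IsAlgClosed.exists_root _ hmapdeg
      have hroot : ∀ {pp : Polynomial L}, d ∣ pp →
          (pp.map (algebraMap L (AlgebraicClosure L))).eval β = 0 := by
        intro pp hdvd
        obtain ⟨e, he⟩ := hdvd
        rw [he, Polynomial.map_mul, Polynomial.eval_mul, hβ, zero_mul]
      have hβn : β ^ n = 1 := by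
        have h := hroot hd1
        rw [Polynomial.map_sub, Polynomial.map_pow, Polynomial.map_X, Polynomial.map_one,
          Polynomial.eval_sub, Polynomial.eval_pow, Polynomial.eval_X, Polynomial.eval_one] at h
        exact sub_eq_zero.mp h
      have hβ0 : β ≠ 0 := by
        intro h
        rw [h, zero_pow hn.ne'] at hβn
        exact zero_ne_one hβn
      have hβinv : (β⁻¹) ^ n = 1 := by rw [inv_pow, hβn, inv_one]
      have hS : ∑ i : Fin n,
          algebraMap L (AlgebraicClosure L) (α ^ q ^ (i : ℕ)) * β ^ (n - 1 - (i : ℕ)) = 0 := by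
        have h := hroot hd2
        rw [hgfin] at h
        simpa [Polynomial.eval_finset_sum] using h
      have hS' : ∑ i : Fin n,
          algebraMap L (AlgebraicClosure L) (α ^ q ^ (i : ℕ)) * (β⁻¹) ^ (i : ℕ) = 0 := by
        have hterm2 : ∀ i : Fin n, β ^ (n - 1 - (i : ℕ)) = β ^ (n - 1) * (β⁻¹) ^ (i : ℕ) := by
          intro i
          rw [inv_pow, eq_comm, mul_inv_eq_iff_eq_mul₀ (pow_ne_zero _ hβ0), ← pow_add]
          congr 1
          omega
        have h2 : β ^ (n - 1) * ∑ i : Fin n,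
            algebraMap L (AlgebraicClosure L) (α ^ q ^ (i : ℕ)) * (β⁻¹) ^ (i : ℕ) = 0 := by
          rw [Finset.mul_sum, ← hS]
          refine Finset.sum_congr rfl fun i _ => ?_
          rw [hterm2 i]
          ring
        rcases mul_eq_zero.mp h2 with h | h
        · exact absurd h (pow_ne_zero _ hβ0)
        · exact h
      set v : Fin n → AlgebraicClosure L := fun j => (β⁻¹) ^ (j : ℕ) with hv
      have hv0 : v ≠ 0 := by
        intro h
        have h0 := congrFun h ⟨0, hn⟩
        simp [hv] at h0
      have hmv : (M.map (algebraMap L (AlgebraicClosure L))).mulVec v = 0 := by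
        funext k
        simp only [Pi.zero_apply]
        have hrowm : (M.map (algebraMap L (AlgebraicClosure L))).mulVec v k =
            ∑ j : Fin n, algebraMap L (AlgebraicClosure L)
              (α ^ q ^ (((k : ℕ) + (j : ℕ)) % n)) * v j := by
          simp [hM, Matrix.mulVec, dotProduct, Matrix.map_apply]
        rw [hrowm]
        have hterm3 : ∀ j : Fin n,
            algebraMap L (AlgebraicClosure L) (α ^ q ^ (((k : ℕ) + (j : ℕ)) % n)) * v j =
            β ^ (k : ℕ) * (algebraMap L (AlgebraicClosure L)
              (α ^ q ^ (((k + j : Fin n) : ℕ))) * (β⁻¹) ^ ((k + j : Fin n) : ℕ)) := by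
          intro j
          simp only [hv, Fin.val_add]
          rw [aux_pow_mod hβinv ((k : ℕ) + (j : ℕ)), pow_add, inv_pow β (k : ℕ)]
          rw [show β ^ (k : ℕ) * (algebraMap L (AlgebraicClosure L)
              (α ^ q ^ (((k : ℕ) + (j : ℕ)) % n)) * ((β ^ (k : ℕ))⁻¹ * (β⁻¹) ^ (j : ℕ))) =
              (β ^ (k : ℕ) * (β ^ (k : ℕ))⁻¹) * (algebraMap L (AlgebraicClosure L)
              (α ^ q ^ (((k : ℕ) + (j : ℕ)) % n)) * (β⁻¹) ^ (j : ℕ)) from by ring]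
          rw [mul_inv_cancel₀ (pow_ne_zero _ hβ0), one_mul]
        calc ∑ j : Fin n,
            algebraMap L (AlgebraicClosure L) (α ^ q ^ (((k : ℕ) + (j : ℕ)) % n)) * v j
            = ∑ j : Fin n, β ^ (k : ℕ) * (algebraMap L (AlgebraicClosure L)
              (α ^ q ^ (((k + j : Fin n) : ℕ))) * (β⁻¹) ^ ((k + j : Fin n) : ℕ)) :=
              Finset.sum_congr rfl fun j _ => hterm3 j
          _ = β ^ (k : ℕ) * ∑ j : Fin n, (algebraMap L (AlgebraicClosure L)
              (α ^ q ^ (((k + j : Fin n) : ℕ))) * (β⁻¹) ^ ((k + j : Fin n) : ℕ)) :=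
              (Finset.mul_sum _ _ _).symm
          _ = β ^ (k : ℕ) * ∑ i : Fin n, (algebraMap L (AlgebraicClosure L)
              (α ^ q ^ ((i : ℕ))) * (β⁻¹) ^ (i : ℕ)) := by
              congr 1
              exact Fintype.sum_bijective (fun j => k + j) (AddGroup.addLeft_bijective k) _ _
                (fun j => rfl)
          _ = 0 := by rw [hS', mul_zero]
      have hdm : (M.map (algebraMap L (AlgebraicClosure L))).det = 0 :=
        Matrix.exists_mulVec_eq_zero_iff.mp ⟨v, hv0, hmv⟩
      have hdm0 : algebraMap L (AlgebraicClosure L) M.det = 0 := by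
        rw [RingHom.map_det]
        exact hdm
      apply (algebraMap L (AlgebraicClosure L)).injective
      rw [hdm0, map_zero]
    · -- coprime → det ≠ 0
      intro hcop hdet
      obtain ⟨c, hc0, hcv⟩ := Matrix.exists_mulVec_eq_zero_iff.mpr hdet
      set cp : Polynomial L := ∑ j : Fin n, Polynomial.C (c j) * Polynomial.X ^ (j : ℕ)
        with hcp
      obtain ⟨j0, hj0⟩ := Function.ne_iff.mp hc0
      have hcoeff : cp.coeff (j0 : ℕ) = c j0 := by
        rw [hcp, Polynomial.finset_sum_coeff, Finset.sum_eq_single j0]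
        · simp
        · intro j _ hjk
          have hne : ¬ ((j0 : ℕ) = (j : ℕ)) := fun h => hjk (Fin.ext h.symm)
          simp [Polynomial.coeff_X_pow, hne, fun h => hjk (Fin.ext h)]
        · simp
      have hcpne : cp ≠ 0 := by
        intro h
        rw [h, Polynomial.coeff_zero] at hcoeff
        exact hj0 (by simpa using hcoeff.symm)
      have hdvd : (Polynomial.X ^ n - 1 : Polynomial L) ∣ cp * gp := by
        rw [← AdjoinRoot.mk_eq_zero]
        have ht : (AdjoinRoot.root (Polynomial.X ^ n - 1 : Polynomial L)) ^ n = 1 := by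
          have h := AdjoinRoot.mk_self (f := (Polynomial.X ^ n - 1 : Polynomial L))
          rw [map_sub, map_pow, map_one, AdjoinRoot.mk_X] at h
          exact sub_eq_zero.mp h
        set t := AdjoinRoot.root (Polynomial.X ^ n - 1 : Polynomial L) with htdef
        set o := AdjoinRoot.of (Polynomial.X ^ n - 1 : Polynomial L) with hodef
        have hcp' : AdjoinRoot.mk (Polynomial.X ^ n - 1 : Polynomial L) cp =
            ∑ j : Fin n, o (c j) * t ^ (j : ℕ) := by
          rw [hcp, map_sum]
          exact Finset.sum_congr rfl fun j _ => by
            rw [map_mul, AdjoinRoot.mk_C, map_pow, AdjoinRoot.mk_X]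
        have hgp' : AdjoinRoot.mk (Polynomial.X ^ n - 1 : Polynomial L) gp =
            ∑ i : Fin n, o (α ^ q ^ (i : ℕ)) * t ^ (n - 1 - (i : ℕ)) := by
          rw [hgfin, map_sum]
          refine Finset.sum_congr rfl fun i _ => ?_
          rw [map_mul, AdjoinRoot.mk_C]
          congr 1
        rw [map_mul, hcp', hgp', Finset.sum_mul_sum]
        have hterm4 : ∀ j i : Fin n,
            (o (c j) * t ^ (j : ℕ)) * (o (α ^ q ^ (i : ℕ)) * t ^ (n - 1 - (i : ℕ))) =
            o (α ^ q ^ (i : ℕ) * c j) * t ^ (((j : ℕ) + (n - 1 - (i : ℕ))) % n) := by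
          intro j i
          rw [aux_pow_mod ht, map_mul, pow_add]
          ring
        calc ∑ j : Fin n, ∑ i : Fin n,
            (o (c j) * t ^ (j : ℕ)) * (o (α ^ q ^ (i : ℕ)) * t ^ (n - 1 - (i : ℕ)))
            = ∑ j : Fin n, ∑ k : Fin n,
              o (α ^ q ^ (((j : ℕ) + (k : ℕ)) % n) * c j) * t ^ (n - 1 - (k : ℕ)) := by
              refine Finset.sum_congr rfl fun j _ => ?_
              rw [← Fintype.sum_bijective (fun k : Fin n => j + k) (AddGroup.addLeft_bijective j)
                (fun k : Fin n => (o (c j) * t ^ (j : ℕ)) *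
                  (o (α ^ q ^ (((j + k : Fin n) : ℕ))) * t ^ (n - 1 - ((j + k : Fin n) : ℕ))))
                (fun i : Fin n => (o (c j) * t ^ (j : ℕ)) *
                  (o (α ^ q ^ (i : ℕ)) * t ^ (n - 1 - (i : ℕ)))) (fun k => rfl)]
              refine Finset.sum_congr rfl fun k _ => ?_
              show (o (c j) * t ^ (j : ℕ)) *
                (o (α ^ q ^ (((j + k : Fin n) : ℕ))) * t ^ (n - 1 - ((j + k : Fin n) : ℕ))) = _
              rw [hterm4 j (j + k), Fin.val_add,
                aux_exp (j : ℕ) (k : ℕ) hn j.isLt k.isLt]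
          _ = ∑ k : Fin n,
              o (∑ j : Fin n, α ^ q ^ (((k : ℕ) + (j : ℕ)) % n) * c j) * t ^ (n - 1 - (k : ℕ)) := by
              rw [Finset.sum_comm]
              refine Finset.sum_congr rfl fun k _ => ?_
              rw [map_sum, Finset.sum_mul]
              refine Finset.sum_congr rfl fun j _ => ?_
              rw [Nat.add_comm (j : ℕ) (k : ℕ)]
          _ = 0 := by
              refine Finset.sum_eq_zero fun k _ => ?_
              rw [← hrow c k, hcv]
              simp
      have hdvd2 : (Polynomial.X ^ n - 1 : Polynomial L) ∣ cp :=
        hcop.dvd_of_dvd_mul_right hdvd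
      have hcple : cp.degree < (Polynomial.X ^ n - 1 : Polynomial L).degree := by
        rw [hdegf]
        refine lt_of_le_of_lt (Polynomial.degree_sum_le _ _) ?_
        rw [Finset.sup_lt_iff (by exact_mod_cast WithBot.bot_lt_coe n)]
        intro j _
        refine lt_of_le_of_lt (Polynomial.degree_C_mul_X_pow_le _ _) ?_
        exact_mod_cast j.isLt
      exact hcpne (Polynomial.eq_zero_of_dvd_of_degree_lt hdvd2 hcple)
  rw [h1, h2, h3]
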